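/- Let T satisfy T = 1 + zT^3, T' = T^3/(1 - 3zT^2), and let Δ₃ be as in the linear system above. Then the generating function δ(z) = 3T + 3zT²Δ₃ + 3z²T²T' for first-level intradistances equals \sum_R (3 + \sum_{S ∈ S(R)} (Δ₃(S) + |S|)) z^{|R|}, where the outer sum is over all RANS R (interpreting the combinatorial quantities via the ternary tree model). -/

import Mathlib

/-- Rooted plane ternary trees, modeling RANS. -/
inductive Tern : Type
  | leaf : Tern
  | node : Tern → Tern → Tern → Tern
deriving DecidableEq

/-- Order of a RANS. -/
def Tern.size : Tern → ℕ
  | .leaf => 0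
  | .node a b c => 1 + a.size + b.size + c.size

/-- Sum of the distance labels of internal vertices when the outermost
vertices carry labels `a b c` (the center gets `1 + min` of them). -/
def Tern.labelSum : Tern → ℕ → ℕ → ℕ → ℕ
  | .leaf, _, _, _ => 0
  | .node s₁ s₂ s₃, a, b, c =>
      let m := 1 + min a (min b c)
      m + s₁.labelSum m b c + s₂.labelSum a m c + s₃.labelSum a b m

/-- `Δ₃(R)`: sum over internal vertices of the distance to the set of the
three outermost vertices. -/
def Tern.d3 (t : Tern) : ℕ := t.labelSum 0 0 0

/-- The finite set of all ternary trees of size `n`. -/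
def treesOf : ℕ → Finset Tern
  | 0 => {Tern.leaf}
  | n + 1 =>
      (Finset.Nat.antidiagonalTuple 3 n).biUnion fun k =>
        ((treesOf (min (k 0) n) ×ˢ treesOf (min (k 1) n) ×ˢ treesOf (min (k 2) n)).image
          fun p => Tern.node p.1 p.2.1 p.2.2)
  termination_by n => n
  decreasing_by all_goals simp [Nat.lt_succ_iff]

open PowerSeries

theorem mem_treesOf : ∀ (n : ℕ) (t : Tern), t ∈ treesOf n ↔ t.size = n := by
  intro n
  induction n using Nat.strong_induction_on with
  | _ n ih =>
    match n with
    | 0 => intro t; cases t <;> simp [treesOf, Tern.size]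
    | n + 1 =>
      intro t
      rw [treesOf]
      simp only [Finset.mem_biUnion, Finset.mem_image, Finset.mem_product, Prod.exists,
        Finset.Nat.mem_antidiagonalTuple, Fin.sum_univ_three]
      constructor
      · rintro ⟨k, hk, a, b, c, ⟨ha, hb, hc⟩, rfl⟩
        have h0 : k 0 ≤ n := by omega
        have h1 : k 1 ≤ n := by omega
        have h2 : k 2 ≤ n := by omega
        rw [min_eq_left h0, ih _ (Nat.lt_succ_of_le h0)] at ha
        rw [min_eq_left h1, ih _ (Nat.lt_succ_of_le h1)] at hb
        rw [min_eq_left h2, ih _ (Nat.lt_succ_of_le h2)] at hc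
        simp [Tern.size, ha, hb, hc]; omega
      · intro ht
        cases t with
        | leaf => simp [Tern.size] at ht
        | node a b c =>
          simp only [Tern.size] at ht
          refine ⟨![a.size, b.size, c.size], by simp; omega, a, b, c, ⟨?_, ?_, ?_⟩, rfl⟩ <;>
            · simp only [Matrix.cons_val_zero, Matrix.cons_val_one, Matrix.head_cons,
                Matrix.cons_val_two, Matrix.tail_cons]
              rw [min_eq_left (by omega), ih _ (by omega)]

theorem sum_treesOf_succ (n : ℕ) (F : Tern → ℚ) :
    ∑ t ∈ treesOf (n + 1), F t =
      ∑ k ∈ Finset.Nat.antidiagonalTuple 3 n,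
        ∑ a ∈ treesOf (k 0), ∑ b ∈ treesOf (k 1), ∑ c ∈ treesOf (k 2),
          F (Tern.node a b c) := by
  rw [treesOf]
  rw [Finset.sum_biUnion]
  · refine Finset.sum_congr rfl fun k hk => ?_
    have hk' := (Finset.Nat.mem_antidiagonalTuple.mp hk)
    rw [Fin.sum_univ_three] at hk'
    rw [min_eq_left (by omega : k 0 ≤ n), min_eq_left (by omega : k 1 ≤ n),
      min_eq_left (by omega : k 2 ≤ n)]
    rw [Finset.sum_image (by rintro ⟨a, b, c⟩ _ ⟨a', b', c'⟩ _ h; simpa using h)]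
    rw [Finset.sum_product, Finset.sum_congr rfl fun a _ => Finset.sum_product _ _ _]
  · intro k hk k' hk' hne
    simp only [Finset.disjoint_left, Finset.mem_image, Finset.mem_product, Prod.exists]
    rintro t ⟨a, b, c, ⟨ha, hb, hc⟩, rfl⟩ ⟨a', b', c', ⟨ha', hb', hc'⟩, h⟩
    injection h with e1 e2 e3
    subst e1; subst e2; subst e3
    apply hne
    have hk1 := Finset.Nat.mem_antidiagonalTuple.mp hk
    have hk2 := Finset.Nat.mem_antidiagonalTuple.mp hk'
    rw [Fin.sum_univ_three] at hk1 hk2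
    have sa := (mem_treesOf _ a').mp ha
    have sb := (mem_treesOf _ b').mp hb
    have sc := (mem_treesOf _ c').mp hc
    have sa' := (mem_treesOf _ a').mp ha'
    have sb' := (mem_treesOf _ b').mp hb'
    have sc' := (mem_treesOf _ c').mp hc'
    funext i
    fin_cases i <;> simp_all <;> omega



theorem sum_adt3 (n : ℕ) (f : ℕ → ℕ → ℕ → ℚ) :
    ∑ k ∈ Finset.Nat.antidiagonalTuple 3 n, f (k 0) (k 1) (k 2) =
      ∑ p ∈ Finset.HasAntidiagonal.antidiagonal n, ∑ q ∈ Finset.HasAntidiagonal.antidiagonal p.2, f p.1 q.1 q.2 := by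
  rw [Finset.sum_sigma']
  refine Finset.sum_nbij' (fun k => ⟨(k 0, k 1 + k 2), (k 1, k 2)⟩)
    (fun p => ![p.1.1, p.2.1, p.2.2]) ?_ ?_ ?_ ?_ ?_
  · intro k hk
    have := Finset.Nat.mem_antidiagonalTuple.mp hk
    rw [Fin.sum_univ_three] at this
    simp [Finset.mem_sigma, Finset.mem_antidiagonal, this]; omega
  · rintro ⟨⟨i, j⟩, ⟨p, q⟩⟩ hp
    simp only [Finset.mem_sigma, Finset.mem_antidiagonal] at hp
    rw [Finset.Nat.mem_antidiagonalTuple, Fin.sum_univ_three]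
    simp at hp ⊢; omega
  · intro k hk; funext i; fin_cases i <;> simp
  · rintro ⟨⟨i, j⟩, ⟨p, q⟩⟩ hp
    simp only [Finset.mem_sigma, Finset.mem_antidiagonal] at hp
    simp at hp ⊢; omega
  · intro k hk; rfl

theorem coeff_X_mul3 (n : ℕ) (f g h : ℕ → ℚ) :
    coeff (n + 1) (X * PowerSeries.mk f * PowerSeries.mk g * PowerSeries.mk h) =
      ∑ k ∈ Finset.Nat.antidiagonalTuple 3 n, f (k 0) * g (k 1) * h (k 2) := by
  have : X * PowerSeries.mk f * PowerSeries.mk g * PowerSeries.mk h =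
      X * (PowerSeries.mk f * (PowerSeries.mk g * PowerSeries.mk h)) := by ring
  rw [this, coeff_succ_X_mul, coeff_mul, sum_adt3 n (fun i j k => f i * g j * h k)]
  refine Finset.sum_congr rfl fun p hp => ?_
  rw [coeff_mk, coeff_mul, Finset.mul_sum]
  refine Finset.sum_congr rfl fun q hq => ?_
  rw [coeff_mk, coeff_mk, mul_assoc]


noncomputable def Aq : PowerSeries ℚ := PowerSeries.mk fun n => ((treesOf n).card : ℚ)
noncomputable def Sq : PowerSeries ℚ :=
  PowerSeries.mk fun n => ∑ t ∈ treesOf n, (t.size : ℚ)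

lemma sum_one_card (s : Finset Tern) : ∑ _ ∈ s, (1 : ℚ) = s.card := by simp

lemma triple_add (s u v : Finset Tern) (p q r : Tern → ℚ) :
    ∑ a ∈ s, ∑ b ∈ u, ∑ c ∈ v, (p a + q b + r c) =
      (∑ a ∈ s, p a) * u.card * v.card + (s.card : ℚ) * (∑ b ∈ u, q b) * v.card +
        (s.card : ℚ) * u.card * (∑ c ∈ v, r c) := by
  simp [Finset.sum_add_distrib, Finset.sum_const, Finset.mul_sum, Finset.sum_mul,
    nsmul_eq_mul, mul_comm, mul_assoc, mul_left_comm]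

lemma triple_mul (s u v : Finset Tern) (p q r : Tern → ℚ) :
    ∑ a ∈ s, ∑ b ∈ u, ∑ c ∈ v, (p a * q b * r c) =
      (∑ a ∈ s, p a) * (∑ b ∈ u, q b) * (∑ c ∈ v, r c) := by
  simp only [mul_assoc, ← Finset.mul_sum, ← Finset.sum_mul]

theorem Aq_eq : Aq = 1 + X * Aq ^ 3 := by
  ext n
  cases n with
  | zero =>
    simp [Aq, treesOf, coeff_zero_eq_constantCoeff, map_add, map_mul]
  | succ n =>
    have h : (1 : PowerSeries ℚ) + X * Aq ^ 3 =
        1 + (X * PowerSeries.mk (fun m => ((treesOf m).card : ℚ)) *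
          PowerSeries.mk (fun m => ((treesOf m).card : ℚ)) *
          PowerSeries.mk (fun m => ((treesOf m).card : ℚ))) := by
      rw [show Aq = PowerSeries.mk (fun m => ((treesOf m).card : ℚ)) from rfl]; ring
    rw [h, map_add, coeff_one, coeff_X_mul3, if_neg (Nat.succ_ne_zero n), zero_add]
    rw [show (PowerSeries.coeff (n+1)) Aq = ((treesOf (n+1)).card : ℚ) from coeff_mk _ _]
    rw [← sum_one_card, sum_treesOf_succ]
    refine Finset.sum_congr rfl fun k _ => ?_
    simp [Finset.sum_const, nsmul_eq_mul]
    ring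

theorem Sq_eq : Sq = X * Aq ^ 3 + 3 * X * Aq ^ 2 * Sq := by
  have hrw : X * Aq ^ 3 + 3 * X * Aq ^ 2 * Sq =
      X * Aq * Aq * Aq + (X * Sq * Aq * Aq + (X * Aq * Sq * Aq + X * Aq * Aq * Sq)) := by
    ring
  ext n
  rw [hrw]
  cases n with
  | zero =>
    simp [Sq, treesOf, Tern.size, coeff_zero_eq_constantCoeff, map_add, map_mul]
  | succ n =>
    rw [show Aq = PowerSeries.mk (fun m => ((treesOf m).card : ℚ)) from rfl,
      show Sq = PowerSeries.mk (fun m => ∑ t ∈ treesOf m, (t.size : ℚ)) from rfl]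
    rw [map_add, map_add, map_add, coeff_X_mul3, coeff_X_mul3, coeff_X_mul3, coeff_X_mul3,
      coeff_mk, sum_treesOf_succ]
    rw [← Finset.sum_add_distrib, ← Finset.sum_add_distrib, ← Finset.sum_add_distrib]
    refine Finset.sum_congr rfl fun k _ => ?_
    have h := triple_add (treesOf (k 0)) (treesOf (k 1)) (treesOf (k 2))
      (fun a => (1 : ℚ) + a.size) (fun b => (b.size : ℚ)) (fun c => (c.size : ℚ))
    simp only [Tern.size] at *
    push_cast
    rw [h]
    simp only [Finset.sum_add_distrib, Finset.sum_const, nsmul_eq_mul, mul_one]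
    ring

theorem T_eq_Aq (T : PowerSeries ℚ) (hT : T = 1 + X * T ^ 3) : T = Aq := by
  have h1 : T - Aq = X * (T ^ 3 - Aq ^ 3) := by
    conv_lhs => rw [hT, Aq_eq]
    ring
  have key : (T - Aq) * (1 - X * (T ^ 2 + T * Aq + Aq ^ 2)) = 0 := by
    have h2 : (T - Aq) * (1 - X * (T ^ 2 + T * Aq + Aq ^ 2)) =
        (T - Aq) - X * (T ^ 3 - Aq ^ 3) := by ring
    rw [h2, ← h1, sub_self]
  rcases mul_eq_zero.mp key with h | h
  · linear_combination h
  · exfalso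
    have := congrArg (constantCoeff) h
    simp [map_sub, map_mul, constantCoeff_X] at this

theorem Sq_closed : X * (Aq ^ 3 * (1 - 3 * X * Aq ^ 2)⁻¹) = Sq := by
  have hu : constantCoeff (1 - 3 * X * Aq ^ 2) ≠ 0 := by
    simp [map_sub, map_mul, constantCoeff_X]
  have h1 : Sq * (1 - 3 * X * Aq ^ 2) = X * Aq ^ 3 := by
    linear_combination Sq_eq
  have := PowerSeries.mul_inv_cancel _ hu
  calc X * (Aq ^ 3 * (1 - 3 * X * Aq ^ 2)⁻¹)
      = (X * Aq ^ 3) * (1 - 3 * X * Aq ^ 2)⁻¹ := by ring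
    _ = Sq * ((1 - 3 * X * Aq ^ 2) * (1 - 3 * X * Aq ^ 2)⁻¹) := by rw [← h1]; ring
    _ = Sq := by rw [this, mul_one]

noncomputable def Dq : PowerSeries ℚ :=
  PowerSeries.mk fun n => ∑ t ∈ treesOf n, (t.d3 : ℚ)

open PowerSeries

/-- The generating function `δ(z) = 3T + 3zT²Δ₃ + 3z²T²T'` for first-level
intradistances equals `∑_R (3 + ∑_{S ∈ 𝒮(R)} (Δ₃(S) + |S|)) z^{|R|}`, the sum
being over all RANS `R` (via the ternary tree model). -/
theorem intradistance_first_level (T Δ₃ : PowerSeries ℚ)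
    (hT : T = 1 + X * T ^ 3)
    (hΔ₃ : ∀ n, PowerSeries.coeff n Δ₃ = ∑ t ∈ treesOf n, (t.d3 : ℚ)) :
    ∀ n, PowerSeries.coeff n
        (3 * T + 3 * X * T ^ 2 * Δ₃ +
          3 * X ^ 2 * T ^ 2 * (T ^ 3 * (1 - 3 * X * T ^ 2)⁻¹)) =
      ∑ t ∈ treesOf n,
        ((3 : ℚ) + match t with
          | .leaf => 0
          | .node a b c => ((a.d3 + a.size) + (b.d3 + b.size) + (c.d3 + c.size) : ℚ)) := by
  have hTA : T = Aq := T_eq_Aq T hT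
  have hD : Δ₃ = Dq := by
    ext m
    rw [hΔ₃]
    exact (coeff_mk m (fun n => ∑ t ∈ treesOf n, (t.d3 : ℚ))).symm
  have hmain : 3 * T + 3 * X * T ^ 2 * Δ₃ +
      3 * X ^ 2 * T ^ 2 * (T ^ 3 * (1 - 3 * X * T ^ 2)⁻¹) =
      3 * Aq + (X * (Dq + Sq) * Aq * Aq +
        (X * Aq * (Dq + Sq) * Aq + X * Aq * Aq * (Dq + Sq))) := by
    rw [hTA, hD]
    calc 3 * Aq + 3 * X * Aq ^ 2 * Dq + 3 * X ^ 2 * Aq ^ 2 * (Aq ^ 3 * (1 - 3 * X * Aq ^ 2)⁻¹)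
        = 3 * Aq + 3 * X * Aq ^ 2 * Dq +
          3 * X * Aq ^ 2 * (X * (Aq ^ 3 * (1 - 3 * X * Aq ^ 2)⁻¹)) := by ring
      _ = 3 * Aq + 3 * X * Aq ^ 2 * Dq + 3 * X * Aq ^ 2 * Sq := by rw [Sq_closed]
      _ = _ := by ring
  intro n
  rw [hmain]
  have hDS : Dq + Sq = PowerSeries.mk (fun m => ∑ t ∈ treesOf m, ((t.d3 : ℚ) + t.size)) := by
    ext m
    simp [Dq, Sq, coeff_mk, Finset.sum_add_distrib]
  have hcoeff3 : ∀ m, PowerSeries.coeff m (3 * Aq) = 3 * ((treesOf m).card : ℚ) := by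
    intro m
    rw [show (3 : PowerSeries ℚ) = C 3 from (map_ofNat C 3).symm, coeff_C_mul,
      show Aq = PowerSeries.mk (fun m => ((treesOf m).card : ℚ)) from rfl, coeff_mk]
  cases n with
  | zero =>
    rw [map_add, map_add, map_add, hcoeff3]
    simp only [coeff_zero_eq_constantCoeff, map_mul, constantCoeff_X, zero_mul, mul_zero,
      add_zero, zero_add]
    simp [treesOf]
  | succ n =>
    rw [map_add, map_add, map_add, hcoeff3, hDS,
      show Aq = PowerSeries.mk (fun m => ((treesOf m).card : ℚ)) from rfl,
      coeff_X_mul3, coeff_X_mul3, coeff_X_mul3]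
    rw [Finset.sum_add_distrib, Finset.sum_const, nsmul_eq_mul,
      sum_treesOf_succ n (fun t => match t with
        | .leaf => (0 : ℚ)
        | .node a b c => ((a.d3 + a.size) + (b.d3 + b.size) + (c.d3 + c.size) : ℚ))]
    rw [← Finset.sum_add_distrib, ← Finset.sum_add_distrib]
    rw [show ((treesOf (n+1)).card : ℚ) * 3 = 3 * ((treesOf (n+1)).card : ℚ) by ring]
    congr 1
    refine (Finset.sum_congr rfl fun k _ => ?_).symm
    have h := triple_add (treesOf (k 0)) (treesOf (k 1)) (treesOf (k 2))
      (fun a => ((a.d3 : ℚ) + a.size)) (fun b => ((b.d3 : ℚ) + b.size))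
      (fun c => ((c.d3 : ℚ) + c.size))
    rw [h]
    ring
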